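/- Let φ ∈ 𝒞. Then: (i) the function t ↦ log φ(H_φ^{-1}(t)) is nondecreasing and concave on [0,∞), with derivative φ'(H_φ^{-1}(t)) tending to 0 as t → ∞; (ii) consequently the sequence r_φ(n) = φ(H_φ^{-1}(n))/φ(1) is subgeometric: r_φ(0) = 1, r_φ is nondecreasing, and n ↦ log r_φ(n)/n is nonincreasing with limit 0 as n → ∞. -/

import Mathlib

open Filter Set Topology

noncomputable section

/-- `φ ∈ 𝒞`: concave, differentiable on `[1,∞)` with derivative `φ'`, positive,
`φ(1) > 0`, `φ(v) → ∞` and `φ'(v) → 0` as `v → ∞`. -/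
structure MemC (φ φ' : ℝ → ℝ) : Prop where
  concave : ConcaveOn ℝ (Set.Ici 1) φ
  pos : ∀ v ∈ Set.Ici (1 : ℝ), 0 < φ v
  hasDeriv : ∀ v ∈ Set.Ici (1 : ℝ), HasDerivWithinAt φ (φ' v) (Set.Ici 1) v
  tendsto_atTop : Tendsto φ atTop atTop
  deriv_tendsto_zero : Tendsto φ' atTop (nhds 0)

/-- `H_φ(v) = ∫_1^v dt/φ(t)`. -/
def Hphi (φ : ℝ → ℝ) (v : ℝ) : ℝ := ∫ t in (1 : ℝ)..v, 1 / φ t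

/-- `Hinv` is the inverse `H_φ^{-1} : [0,∞) → [1,∞)` of `H_φ`. -/
def IsHphiInv (φ : ℝ → ℝ) (Hinv : ℝ → ℝ) : Prop :=
  (∀ t ∈ Set.Ici (0 : ℝ), 1 ≤ Hinv t ∧ Hphi φ (Hinv t) = t) ∧
  (∀ v ∈ Set.Ici (1 : ℝ), Hinv (Hphi φ v) = v)

/-- A sequence `r : ℕ → [1,∞)` is subgeometric: `r 0 = 1`, nondecreasing, and
`log r(n)/n` is nonincreasing (over `n ≥ 1`) with limit `0`. -/
def Subgeometric (r : ℕ → ℝ) : Prop :=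
  r 0 = 1 ∧ (∀ n, 1 ≤ r n) ∧ Monotone r ∧
    (∀ n m : ℕ, 1 ≤ n → n ≤ m → Real.log (r m) / m ≤ Real.log (r n) / n) ∧
    Tendsto (fun n : ℕ => Real.log (r n) / n) atTop (nhds 0)

/-- for `φ ∈ 𝒞`, (i) `t ↦ log φ(H_φ^{-1}(t))` is nondecreasing and concave
on `[0,∞)` with derivative `φ'(H_φ^{-1}(t))` tending to `0` at `∞`; (ii) consequently
`r_φ(n) = φ(H_φ^{-1}(n))/φ(1)` is a subgeometric sequence. -/
theorem stmt15 (φ φ' : ℝ → ℝ) (hφ : MemC φ φ') (Hinv : ℝ → ℝ) (hHinv : IsHphiInv φ Hinv) :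
    -- (i)
    (MonotoneOn (fun t => Real.log (φ (Hinv t))) (Ici 0) ∧
     ConcaveOn ℝ (Ici 0) (fun t => Real.log (φ (Hinv t))) ∧
     (∀ t ∈ Ici (0 : ℝ),
        HasDerivWithinAt (fun s => Real.log (φ (Hinv s))) (φ' (Hinv t)) (Ici 0) t) ∧
     Tendsto (fun t : ℝ => φ' (Hinv t)) atTop (nhds 0)) ∧
    -- (ii)
    Subgeometric (fun n : ℕ => φ (Hinv n) / φ 1) := by
  obtain ⟨hinv_mem, hinv_left⟩ := hHinv
  set H : ℝ → ℝ := Hphi φ with hHdef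
  set F : ℝ → ℝ := fun t => Real.log (φ (Hinv t)) with hFdef
  set g : ℝ → ℝ := fun t => φ' (Hinv t) with hgdef
  have φpos := hφ.pos
  have φcont : ContinuousOn φ (Ici 1) := fun v hv => (hφ.hasDeriv v hv).continuousWithinAt
  -- extended integrand
  have hmax : ∀ t : ℝ, max t 1 ∈ Ici (1 : ℝ) := fun t => le_max_right t 1
  have hφm : Continuous (fun t : ℝ => φ (max t 1)) :=
    φcont.comp_continuous (continuous_id.max continuous_const) hmax
  have hφmpos : ∀ t, 0 < φ (max t 1) := fun t => φpos _ (hmax t)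
  set ψ : ℝ → ℝ := fun t => 1 / φ (max t 1) with hψdef
  have ψcont : Continuous ψ := continuous_const.div hφm fun t => (hφmpos t).ne'
  have ψpos : ∀ t, 0 < ψ t := fun t => one_div_pos.mpr (hφmpos t)
  set Ht : ℝ → ℝ := fun v => ∫ t in (1 : ℝ)..v, ψ t with hHtdef
  have HtDeriv : ∀ v : ℝ, HasDerivAt Ht (ψ v) v := fun v =>
    intervalIntegral.integral_hasDerivAt_right (ψcont.intervalIntegrable _ _)
      (ψcont.stronglyMeasurableAtFilter _ _) ψcont.continuousAt
  have HtEq : EqOn H Ht (Ici 1) := by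
    intro v hv
    refine intervalIntegral.integral_congr fun t ht => ?_
    rw [uIcc_of_le (show (1:ℝ) ≤ v from hv)] at ht
    simp only [hψdef, max_eq_left ht.1]
  have HtMono : StrictMono Ht :=
    strictMono_of_deriv_pos fun v => by rw [(HtDeriv v).deriv]; exact ψpos v
  have Hmono : StrictMonoOn H (Ici 1) := fun a ha b hb hab => by
    rw [HtEq ha, HtEq hb]; exact HtMono hab
  have Hmono' : MonotoneOn H (Ici 1) := Hmono.monotoneOn
  have H1 : H 1 = 0 := intervalIntegral.integral_same
  have Hinv0 : Hinv 0 = 1 := by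
    have := hinv_left 1 self_mem_Ici
    rwa [H1] at this
  -- Hinv is monotone
  have hinv_mono : MonotoneOn Hinv (Ici 0) := by
    intro a ha b hb hab
    by_contra hcon
    push_neg at hcon
    have : H (Hinv b) < H (Hinv a) :=
      Hmono (hinv_mem b hb).1 (hinv_mem a ha).1 hcon
    rw [(hinv_mem a ha).2, (hinv_mem b hb).2] at this
    exact absurd hab (not_le.mpr this)
  -- Hinv is continuous
  have hinv_cont : ∀ t₀ ∈ Ici (0 : ℝ), ContinuousWithinAt Hinv (Ici 0) t₀ := by
    intro t₀ ht₀
    obtain ⟨hv1, hHv⟩ := hinv_mem t₀ ht₀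
    rw [ContinuousWithinAt, tendsto_order]
    constructor
    · intro a ha
      rcases lt_or_ge a 1 with h1 | h1
      · filter_upwards [self_mem_nhdsWithin] with t ht
        exact lt_of_lt_of_le h1 (hinv_mem t ht).1
      · have hHa : H a < t₀ := by
          rw [← hHv]; exact Hmono h1 hv1 ha
        filter_upwards [self_mem_nhdsWithin,
          mem_nhdsWithin_of_mem_nhds (Ioi_mem_nhds hHa)] with t ht hta
        by_contra hle
        push_neg at hle
        have : H (Hinv t) ≤ H a := Hmono' (hinv_mem t ht).1 h1 hle
        rw [(hinv_mem t ht).2] at this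
        exact absurd hta (not_lt.mpr this)
    · intro b hb
      have hb1 : (1 : ℝ) < b := lt_of_le_of_lt hv1 hb
      have hHb : t₀ < H b := by
        rw [← hHv]; exact Hmono hv1 hb1.le hb
      filter_upwards [self_mem_nhdsWithin,
        mem_nhdsWithin_of_mem_nhds (Iio_mem_nhds hHb)] with t ht htb
      by_contra hle
      push_neg at hle
      have : H b ≤ H (Hinv t) := Hmono' hb1.le (hinv_mem t ht).1 hle
      rw [(hinv_mem t ht).2] at this
      exact absurd htb (not_lt.mpr this)
  -- derivative of H
  have HderivW : ∀ v ∈ Ici (1 : ℝ), HasDerivWithinAt H (1 / φ v) (Ici 1) v := by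
    intro v hv
    have h1 : HasDerivWithinAt Ht (ψ v) (Ici 1) v := (HtDeriv v).hasDerivWithinAt
    have h2 : HasDerivWithinAt H (ψ v) (Ici 1) v :=
      h1.congr (fun x hx => HtEq hx) (HtEq hv)
    simpa only [hψdef, max_eq_left (show (1:ℝ) ≤ v from hv)] using h2
  -- derivative of Hinv
  have HinvDeriv : ∀ t₀ ∈ Ici (0 : ℝ), HasDerivWithinAt Hinv (φ (Hinv t₀)) (Ici 0) t₀ := by
    intro t₀ ht₀
    obtain ⟨hv₀1, hHv₀⟩ := hinv_mem t₀ ht₀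
    have hφv₀ : (0:ℝ) < φ (Hinv t₀) := φpos _ hv₀1
    have hslopeH : Tendsto (slope H (Hinv t₀)) (𝓝[Ici 1 \ {Hinv t₀}] (Hinv t₀))
        (𝓝 (1 / φ (Hinv t₀))) :=
      hasDerivWithinAt_iff_tendsto_slope.mp (HderivW _ hv₀1)
    have hne : (1 / φ (Hinv t₀)) ≠ 0 := one_div_ne_zero hφv₀.ne'
    have hinvslope : Tendsto (fun v => (slope H (Hinv t₀) v)⁻¹)
        (𝓝[Ici 1 \ {Hinv t₀}] (Hinv t₀)) (𝓝 (φ (Hinv t₀))) := by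
      have := hslopeH.inv₀ hne
      simpa [one_div, inv_inv] using this
    have htend : Tendsto Hinv (𝓝[Ici 0 \ {t₀}] t₀) (𝓝[Ici 1 \ {Hinv t₀}] (Hinv t₀)) := by
      rw [tendsto_nhdsWithin_iff]
      constructor
      · exact (hinv_cont t₀ ht₀).mono_left (nhdsWithin_mono _ diff_subset)
      · filter_upwards [self_mem_nhdsWithin] with t ht
        refine ⟨(hinv_mem t ht.1).1, fun heq => ht.2 ?_⟩
        have : H (Hinv t) = H (Hinv t₀) := by rw [heq]
        rw [(hinv_mem t ht.1).2, hHv₀] at this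
        simpa using this
    rw [hasDerivWithinAt_iff_tendsto_slope]
    refine (hinvslope.comp htend).congr' ?_
    filter_upwards [self_mem_nhdsWithin] with t ht
    obtain ⟨ht0, htne⟩ := ht
    have h1 : H (Hinv t) = t := (hinv_mem t ht0).2
    show (slope H (Hinv t₀) (Hinv t))⁻¹ = slope Hinv t₀ t
    rw [slope_def_field, slope_def_field, h1, hHv₀, inv_div]
  -- derivative of F
  have FderivW : ∀ t ∈ Ici (0 : ℝ),
      HasDerivWithinAt F (g t) (Ici 0) t := by
    intro t₀ ht₀
    have hv := (hinv_mem t₀ ht₀).1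
    have hφv : (0:ℝ) < φ (Hinv t₀) := φpos _ hv
    have h1 : HasDerivWithinAt (φ ∘ Hinv) (φ' (Hinv t₀) * φ (Hinv t₀)) (Ici 0) t₀ :=
      (hφ.hasDeriv _ hv).comp t₀ (HinvDeriv t₀ ht₀) fun t ht => (hinv_mem t ht).1
    have hlog := (Real.hasDerivAt_log hφv.ne').comp_hasDerivWithinAt t₀ h1
    have heq : (φ (Hinv t₀))⁻¹ * (φ' (Hinv t₀) * φ (Hinv t₀)) = φ' (Hinv t₀) := by
      field_simp
    rw [heq] at hlog
    exact hlog
  have Fcont : ContinuousOn F (Ici 0) := fun t ht => (FderivW t ht).continuousWithinAt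
  have FhasAt : ∀ t ∈ Ioi (0 : ℝ), HasDerivAt F (g t) t := fun t ht =>
    (FderivW t (mem_Ici.mpr (mem_Ioi.mp ht).le)).hasDerivAt (Ici_mem_nhds ht)
  -- φ' antitone and nonneg
  have φ'anti : AntitoneOn φ' (Ici 1) := by
    intro x hx y hy hxy
    rcases eq_or_lt_of_le hxy with rfl | h
    · exact le_rfl
    calc φ' y ≤ slope φ x y :=
          hφ.concave.le_slope_of_hasDerivWithinAt hx hy h (hφ.hasDeriv y hy)
      _ ≤ φ' x := hφ.concave.slope_le_of_hasDerivWithinAt hx hy h (hφ.hasDeriv x hx)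
  have φ'nonneg : ∀ x ∈ Ici (1 : ℝ), 0 ≤ φ' x := fun x hx =>
    le_of_tendsto hφ.deriv_tendsto_zero
      (eventually_atTop.2 ⟨x, fun y hy => φ'anti hx (hx.trans hy) hy⟩)
  have ganti : AntitoneOn g (Ici 0) := fun a ha b hb hab =>
    φ'anti (hinv_mem a ha).1 (hinv_mem b hb).1 (hinv_mono ha hb hab)
  have gnonneg : ∀ t ∈ Ici (0:ℝ), 0 ≤ g t := fun t ht => φ'nonneg _ (hinv_mem t ht).1
  -- φ monotone
  have φmono : MonotoneOn φ (Ici 1) := by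
    refine monotoneOn_of_deriv_nonneg (convex_Ici 1) φcont ?_ ?_
    · intro x hx
      rw [interior_Ici] at hx
      exact ((hφ.hasDeriv x (mem_Ici.mpr (mem_Ioi.mp hx).le)).hasDerivAt (Ici_mem_nhds hx)).differentiableAt.differentiableWithinAt
    · intro x hx
      rw [interior_Ici] at hx
      rw [((hφ.hasDeriv x (mem_Ici.mpr (mem_Ioi.mp hx).le)).hasDerivAt (Ici_mem_nhds hx)).deriv]
      exact φ'nonneg x (mem_Ici.mpr (mem_Ioi.mp hx).le)
  -- F monotone
  have Fmono : MonotoneOn F (Ici 0) := by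
    intro a ha b hb hab
    exact Real.log_le_log (φpos _ (hinv_mem a ha).1)
      (φmono (hinv_mem a ha).1 (hinv_mem b hb).1 (hinv_mono ha hb hab))
  -- F concave
  have Fconc : ConcaveOn ℝ (Ici 0) F := by
    refine AntitoneOn.concaveOn_of_deriv (convex_Ici 0) Fcont ?_ ?_
    · intro x hx
      rw [interior_Ici] at hx
      exact (FhasAt x hx).differentiableAt.differentiableWithinAt
    · intro x hx y hy hxy
      rw [interior_Ici] at hx hy
      rw [(FhasAt x hx).deriv, (FhasAt y hy).deriv]
      exact ganti (mem_Ici.mpr (mem_Ioi.mp hx).le) (mem_Ici.mpr (mem_Ioi.mp hy).le) hxy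
  -- Hinv tendsto atTop
  have hinvtop : Tendsto Hinv atTop atTop := by
    rw [tendsto_atTop]
    intro b
    filter_upwards [eventually_ge_atTop (max (H (max b 1)) 0)] with t ht
    have ht0 : (0:ℝ) ≤ t := le_trans (le_max_right _ _) ht
    have htc : H (max b 1) ≤ t := le_trans (le_max_left _ _) ht
    have hc1 : (1:ℝ) ≤ max b 1 := le_max_right _ _
    have hble : max b 1 ≤ Hinv t := by
      by_contra hcon
      push_neg at hcon
      have : H (Hinv t) < H (max b 1) := Hmono (hinv_mem t ht0).1 hc1 hcon
      rw [(hinv_mem t ht0).2] at this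
      exact absurd htc (not_le.mpr this)
    exact le_trans (le_max_left b 1) hble
  have gtend : Tendsto (fun t : ℝ => φ' (Hinv t)) atTop (𝓝 0) :=
    hφ.deriv_tendsto_zero.comp hinvtop
  -- MVT helper
  have mvt : ∀ x y : ℝ, 0 ≤ x → x < y → ∃ c ∈ Ioo x y, F y - F x = g c * (y - x) := by
    intro x y hx hxy
    obtain ⟨c, hc, hceq⟩ := exists_hasDerivAt_eq_slope F g hxy
      (Fcont.mono (Icc_subset_Ici_self.trans (Ici_subset_Ici.2 hx)))
      (fun z hz => FhasAt z (lt_of_le_of_lt hx hz.1))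
    refine ⟨c, hc, ?_⟩
    rw [hceq, div_mul_cancel₀ _ (sub_ne_zero.2 hxy.ne')]
  -- part (ii) prerequisites
  have hφ1 : (0:ℝ) < φ 1 := φpos 1 self_mem_Ici
  have logr : ∀ t : ℝ, t ∈ Ici (0:ℝ) → Real.log (φ (Hinv t) / φ 1) = F t - F 0 := by
    intro t ht
    rw [Real.log_div (φpos _ (hinv_mem t ht).1).ne' hφ1.ne']
    simp [hFdef, Hinv0]
  have r0 : φ (Hinv ((0:ℕ):ℝ)) / φ 1 = 1 := by
    rw [Nat.cast_zero, Hinv0, div_self hφ1.ne']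
  have rmono : Monotone fun n : ℕ => φ (Hinv n) / φ 1 := by
    intro n m hnm
    have : φ (Hinv n) ≤ φ (Hinv m) := by
      have hcast : ((n:ℝ)) ≤ (m:ℝ) := by exact_mod_cast hnm
      exact φmono (hinv_mem _ (mem_Ici.mpr (Nat.cast_nonneg n))).1 (hinv_mem _ (mem_Ici.mpr (Nat.cast_nonneg m))).1
        (hinv_mono (mem_Ici.mpr (Nat.cast_nonneg n)) (mem_Ici.mpr (Nat.cast_nonneg m)) hcast)
    exact (div_le_div_iff_of_pos_right hφ1).mpr this
  have rge1 : ∀ n : ℕ, 1 ≤ φ (Hinv n) / φ 1 := fun n =>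
    le_trans (le_of_eq r0.symm) (rmono (Nat.zero_le n))
  -- slope inequality
  have slope_ineq : ∀ n m : ℕ, 1 ≤ n → n ≤ m →
      Real.log (φ (Hinv m) / φ 1) / m ≤ Real.log (φ (Hinv n) / φ 1) / n := by
    intro n m hn hnm
    rcases eq_or_lt_of_le hnm with rfl | h
    · exact le_rfl
    have hn0 : (0:ℝ) < n := by exact_mod_cast hn
    have hm0 : (0:ℝ) < m := lt_of_lt_of_le hn0 (by exact_mod_cast hnm)
    have hnm' : (n:ℝ) < m := by exact_mod_cast h
    obtain ⟨c₁, hc₁, e₁⟩ := mvt 0 n le_rfl hn0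
    obtain ⟨c₂, hc₂, e₂⟩ := mvt n m hn0.le hnm'
    rw [logr n (mem_Ici.mpr (Nat.cast_nonneg n)), logr m (mem_Ici.mpr (Nat.cast_nonneg m))]
    have hg : g c₂ ≤ g c₁ :=
      ganti (mem_Ici.mpr hc₁.1.le) (mem_Ici.mpr (hn0.le.trans hc₂.1.le)) (hc₁.2.le.trans hc₂.1.le)
    rw [sub_zero] at e₁
    rw [div_le_div_iff₀ hm0 hn0]
    have hFm : F m - F 0 = g c₂ * ((m:ℝ) - n) + g c₁ * n := by linarith
    rw [hFm]
    nlinarith [mul_nonneg (mul_nonneg hn0.le (sub_nonneg.2 hg)) (sub_nonneg.2 hnm'.le)]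
  -- limit
  have hlimit : Tendsto (fun n : ℕ => Real.log (φ (Hinv n) / φ 1) / n) atTop (𝓝 0) := by
    rw [Metric.tendsto_atTop]
    intro ε hε
    obtain ⟨T₀, hT₀⟩ := eventually_atTop.mp (gtend.eventually (gt_mem_nhds (half_pos hε)))
    set T : ℝ := max T₀ 0 with hTdef
    have hT0 : (0:ℝ) ≤ T := le_max_right _ _
    have hgT : g T < ε / 2 := hT₀ T (le_max_left _ _)
    set C : ℝ := F T - F 0 with hCdef
    have hC0 : 0 ≤ C := sub_nonneg.2 (Fmono (mem_Ici.mpr le_rfl) (mem_Ici.mpr hT0) hT0)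
    obtain ⟨N, hN⟩ := exists_nat_gt (max T (2 * C / ε))
    refine ⟨N, fun n hn => ?_⟩
    have hnN : (N:ℝ) ≤ n := by exact_mod_cast hn
    have hTn : T < n := lt_of_le_of_lt (le_max_left _ _) (lt_of_lt_of_le hN hnN)
    have hn0 : (0:ℝ) < n := lt_of_le_of_lt hT0 hTn
    have hCn : 2 * C / ε < n := lt_of_le_of_lt (le_max_right _ _) (lt_of_lt_of_le hN hnN)
    obtain ⟨c, hc, e⟩ := mvt T n hT0 hTn
    have hgc : g c ≤ g T := ganti (mem_Ici.mpr hT0) (mem_Ici.mpr (hT0.trans hc.1.le)) hc.1.le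
    have hgc0 : 0 ≤ g c := gnonneg c (mem_Ici.mpr (hT0.trans hc.1.le))
    have hFn : F n - F 0 ≤ (ε / 2) * n + C := by
      have h1 : F n - F T ≤ (ε / 2) * ((n:ℝ) - T) := by
        rw [e]
        apply mul_le_mul_of_nonneg_right (hgc.trans hgT.le) (by linarith)
      have h2 : (ε / 2) * ((n:ℝ) - T) ≤ (ε / 2) * n := by
        apply mul_le_mul_of_nonneg_left (by linarith) (by positivity)
      linarith
    have hFnonneg : 0 ≤ F n - F 0 :=
      sub_nonneg.2 (Fmono (mem_Ici.mpr le_rfl) (mem_Ici.mpr hn0.le) hn0.le)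
    rw [Real.dist_eq, logr n (mem_Ici.mpr (Nat.cast_nonneg n))]
    have hs : (F n - F 0) / n < ε := by
      rw [div_lt_iff₀ hn0]
      have hCln : C < ε / 2 * n := by
        rw [div_lt_iff₀ hε] at hCn
        linarith
      linarith
    rw [sub_zero, abs_of_nonneg (by positivity : (0:ℝ) ≤ (F ↑n - F 0) / ↑n)]
    exact hs
  -- assemble
  refine ⟨⟨Fmono, Fconc, FderivW, gtend⟩, r0, rge1, rmono, slope_ineq, hlimit⟩
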